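/- (Pointwise limit of the rescaled Green density, Lemma 4.3 part c).) For all fixed w > 0 and y > 0 one has lim_{ε→0⁺} (ε² / σ(yε)²) · exp( ∫_{wε}^{yε} (ε·b₁(l) − b₂(l))/σ(l)² dl ) = (1/s²) · e^{(a/s²)(1/w − 1/y)} · w^{b/s²} / y^{b/s² + 2}. -/

import Mathlib

open MeasureTheory Real Set Filter
open scoped Topology


lemma exists_linear_lower {f : ℝ → ℝ} (hf : ContinuousOn f (Ici 0))
    (hpos : ∀ x ∈ Ioi (0:ℝ), 0 < f x) {d : ℝ} (hd : 0 < d)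
    (hslope : Tendsto (fun x => f x / x) (𝓝[>] 0) (𝓝 d)) (T : ℝ) (hT : 0 < T) :
    ∃ c > 0, ∀ x ∈ Ioc (0:ℝ) T, c * x ≤ f x := by
  have hev : ∀ᶠ x in 𝓝[>] (0:ℝ), d/2 ≤ f x / x :=
    hslope.eventually (eventually_ge_nhds (half_lt_self hd))
  rw [eventually_nhdsWithin_iff] at hev
  obtain ⟨δ, hδpos, hδ⟩ := Metric.eventually_nhds_iff.1 hev
  by_cases hδT : δ ≤ T
  · -- compact piece
    have hne : (Icc (δ/2) T).Nonempty := ⟨δ/2, le_refl _, by linarith⟩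
    obtain ⟨x0, hx0, hmin⟩ := isCompact_Icc.exists_isMinOn hne
      (hf.mono (fun x hx => le_trans (by linarith) hx.1))
    have hm1 : 0 < f x0 := hpos x0 (by have := hx0.1; simp only [mem_Ioi]; linarith)
    refine ⟨min (d/2) (f x0 / T), lt_min (by linarith) (div_pos hm1 hT), ?_⟩
    intro x hx
    by_cases hxδ : x < δ/2
    · have h1 : d/2 ≤ f x / x := hδ (by rw [Real.dist_eq, sub_zero, abs_of_pos hx.1]; linarith) hx.1
      calc min (d/2) (f x0 / T) * x ≤ d/2 * x :=
            mul_le_mul_of_nonneg_right (min_le_left _ _) hx.1.le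
        _ ≤ f x := (le_div_iff₀ hx.1).1 h1
    · push_neg at hxδ
      have hfx : f x0 ≤ f x := hmin ⟨hxδ, hx.2⟩
      calc min (d/2) (f x0 / T) * x ≤ f x0 / T * x :=
            mul_le_mul_of_nonneg_right (min_le_right _ _) hx.1.le
        _ ≤ f x0 / T * T := by
            exact mul_le_mul_of_nonneg_left hx.2 (div_pos hm1 hT).le
        _ = f x0 := by field_simp
        _ ≤ f x := hfx
  · push_neg at hδT
    refine ⟨d/2, by linarith, fun x hx => ?_⟩
    have h1 : d/2 ≤ f x / x := hδ (by rw [Real.dist_eq, sub_zero, abs_of_pos hx.1]; linarith [hx.2]) hx.1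
    exact (le_div_iff₀ hx.1).1 h1

lemma exists_linear_upper {f : ℝ → ℝ} (hf : ContinuousOn f (Ici 0))
    (hnonneg : ∀ x ∈ Ici (0:ℝ), 0 ≤ f x) {d : ℝ}
    (hslope : Tendsto (fun x => f x / x) (𝓝[>] 0) (𝓝 d)) (T : ℝ) (hT : 0 < T) :
    ∃ C ≥ 0, ∀ x ∈ Ioc (0:ℝ) T, f x ≤ C * x := by
  have hev : ∀ᶠ x in 𝓝[>] (0:ℝ), f x / x ≤ |d| + 1 :=
    hslope.eventually (eventually_le_nhds (by nlinarith [le_abs_self d, abs_nonneg d]))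
  rw [eventually_nhdsWithin_iff] at hev
  obtain ⟨δ, hδpos, hδ⟩ := Metric.eventually_nhds_iff.1 hev
  by_cases hδT : δ ≤ T
  · have hne : (Icc (δ/2) T).Nonempty := ⟨δ/2, le_refl _, by linarith⟩
    obtain ⟨x0, hx0, hmax⟩ := isCompact_Icc.exists_isMaxOn hne
      (hf.mono (fun x hx => le_trans (by linarith) hx.1))
    have hm1 : 0 ≤ f x0 := hnonneg x0 (by have := hx0.1; simp only [mem_Ici]; linarith)
    refine ⟨max (|d| + 1) (f x0 / (δ/2)), le_max_of_le_left (by positivity), ?_⟩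
    intro x hx
    by_cases hxδ : x < δ/2
    · have h1 : f x / x ≤ |d| + 1 := hδ (by rw [Real.dist_eq, sub_zero, abs_of_pos hx.1]; linarith) hx.1
      calc f x = f x / x * x := (div_mul_cancel₀ _ hx.1.ne').symm
        _ ≤ (|d| + 1) * x := mul_le_mul_of_nonneg_right h1 hx.1.le
        _ ≤ max (|d| + 1) (f x0 / (δ/2)) * x :=
            mul_le_mul_of_nonneg_right (le_max_left _ _) hx.1.le
    · push_neg at hxδ
      calc f x ≤ f x0 := hmax ⟨hxδ, hx.2⟩
        _ = f x0 / (δ/2) * (δ/2) := by field_simp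
        _ ≤ f x0 / (δ/2) * x :=
            mul_le_mul_of_nonneg_left hxδ (by positivity)
        _ ≤ max (|d| + 1) (f x0 / (δ/2)) * x :=
            mul_le_mul_of_nonneg_right (le_max_right _ _) (by linarith [hx.1] : (0:ℝ) ≤ x)
  · push_neg at hδT
    refine ⟨|d| + 1, by positivity, fun x hx => ?_⟩
    have h1 : f x / x ≤ |d| + 1 := hδ (by rw [Real.dist_eq, sub_zero, abs_of_pos hx.1]; linarith [hx.2]) hx.1
    calc f x = f x / x * x := (div_mul_cancel₀ _ hx.1.ne').symm
      _ ≤ (|d| + 1) * x := mul_le_mul_of_nonneg_right h1 hx.1.le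

lemma slope_tendsto {f : ℝ → ℝ} (hf : ContDiffOn ℝ 1 f (Ici 0)) (h0 : f 0 = 0) :
    Tendsto (fun x => f x / x) (𝓝[>] 0) (𝓝 (derivWithin f (Ici 0) 0)) := by
  have hdiff : DifferentiableWithinAt ℝ f (Ici 0) 0 :=
    (hf.differentiableOn one_ne_zero) 0 self_mem_Ici
  have hd := hdiff.hasDerivWithinAt
  rw [hasDerivWithinAt_iff_tendsto_slope] at hd
  have : Ici (0:ℝ) \ {0} = Ioi 0 := Ici_sdiff_left
  rw [this] at hd
  refine hd.congr' ?_
  filter_upwards [self_mem_nhdsWithin] with x hx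
  simp [slope_def_field, h0]

theorem statement3
    (b1 b2 σ : ℝ → ℝ)
    (hb1 : ContDiffOn ℝ 1 b1 (Ici 0))
    (hb1inf : ∃ m > 0, ∀ x ∈ Ici (0 : ℝ), m ≤ b1 x)
    (hb1sup : ∃ M : ℝ, ∀ x ∈ Ici (0 : ℝ), b1 x ≤ M)
    (hb2 : ContDiffOn ℝ 2 b2 (Ici 0))
    (hb2nonneg : ∀ x ∈ Ici (0 : ℝ), 0 ≤ b2 x)
    (hb20 : b2 0 = 0)
    (hσ : ContDiffOn ℝ 2 σ (Ici 0))
    (hσnonneg : ∀ x ∈ Ici (0 : ℝ), 0 ≤ σ x)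
    (hσzero : ∀ x ∈ Ici (0 : ℝ), (σ x = 0 ↔ x = 0))
    (a b s : ℝ)
    (ha : a = b1 0)
    (hb : b = derivWithin b2 (Ici 0) 0) (hbpos : 0 < b)
    (hs : s = derivWithin σ (Ici 0) 0) (hspos : 0 < s)
    (w y : ℝ) (hw : 0 < w) (hy : 0 < y) :
    Tendsto
      (fun ε : ℝ =>
        ε ^ 2 / σ (y * ε) ^ 2 *
          Real.exp (∫ l in (w * ε)..(y * ε), (ε * b1 l - b2 l) / σ l ^ 2))
      (𝓝[>] (0 : ℝ))
      (𝓝 (1 / s ^ 2 * Real.exp (a / s ^ 2 * (1 / w - 1 / y)) *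
        w ^ (b / s ^ 2) / y ^ (b / s ^ 2 + 2))) := by
  obtain ⟨m, hm, hmle⟩ := hb1inf
  obtain ⟨M, hM⟩ := hb1sup
  have hMpos : 0 < M := lt_of_lt_of_le hm (le_trans (hmle 0 self_mem_Ici) (hM 0 self_mem_Ici))
  have hσ0 : σ 0 = 0 := (hσzero 0 self_mem_Ici).2 rfl
  have hσpos : ∀ x ∈ Ioi (0:ℝ), 0 < σ x := by
    intro x hx
    refine lt_of_le_of_ne (hσnonneg x (mem_Ici.2 (le_of_lt hx))) ?_
    intro h
    exact (ne_of_gt hx) ((hσzero x (mem_Ici.2 (le_of_lt hx))).1 h.symm)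
  have hσslope : Tendsto (fun x => σ x / x) (𝓝[>] 0) (𝓝 s) := by
    rw [hs]; exact slope_tendsto (hσ.of_le one_le_two) hσ0
  have hb2slope : Tendsto (fun x => b2 x / x) (𝓝[>] 0) (𝓝 b) := by
    rw [hb]; exact slope_tendsto (hb2.of_le one_le_two) hb20
  set m0 : ℝ := min w y with hm0def
  set T : ℝ := max w y with hTdef
  have hm0 : 0 < m0 := lt_min hw hy
  have hT : 0 < T := lt_of_lt_of_le hm0 (min_le_max)
  obtain ⟨c, hc, hclow⟩ := exists_linear_lower (hσ.continuousOn) hσpos hspos hσslope T hT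
  obtain ⟨C, hC, hCup⟩ := exists_linear_upper (hb2.continuousOn) hb2nonneg hb2slope T hT
  -- basic: ε ↦ u * ε tends to 0 within Ioi 0
  have hmul : ∀ u : ℝ, 0 < u → Tendsto (fun ε => u * ε) (𝓝[>] (0:ℝ)) (𝓝[>] (0:ℝ)) := by
    intro u hu
    rw [tendsto_nhdsWithin_iff]
    constructor
    · have h1 : Tendsto (fun ε : ℝ => u * ε) (𝓝 0) (𝓝 (u * 0)) :=
        (tendsto_id.const_mul u)
      rw [mul_zero] at h1
      exact h1.mono_left nhdsWithin_le_nhds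
    · filter_upwards [self_mem_nhdsWithin] with ε hε
      exact mul_pos hu hε
  have hσu : ∀ u : ℝ, 0 < u → Tendsto (fun ε => σ (u * ε) / ε) (𝓝[>] (0:ℝ)) (𝓝 (s * u)) := by
    intro u hu
    have h := (hσslope.comp (hmul u hu)).mul_const u
    refine h.congr' ?_
    filter_upwards [self_mem_nhdsWithin] with ε hε
    have hε0 : (0:ℝ) < ε := hε
    simp only [Function.comp_apply]
    rw [div_mul_eq_mul_div, mul_comm u ε, mul_div_mul_right _ _ hu.ne']
  have hpre : Tendsto (fun ε : ℝ => ε ^ 2 / σ (y * ε) ^ 2) (𝓝[>] (0:ℝ))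
      (𝓝 (((s * y) ^ 2)⁻¹)) := by
    have h1 := ((hσu y hy).pow 2).inv₀ (pow_ne_zero 2 (mul_pos hspos hy).ne')
    refine h1.congr (fun ε => ?_)
    rw [div_pow, inv_div]
  set F : ℝ → ℝ → ℝ := fun ε u => ε * ((ε * b1 (u * ε) - b2 (u * ε)) / σ (u * ε) ^ 2)
    with hFdef
  set g : ℝ → ℝ := fun u => a / (s ^ 2 * u ^ 2) - b / (s ^ 2 * u) with hgdef
  have hpt : ∀ u : ℝ, 0 < u → Tendsto (fun ε => F ε u) (𝓝[>] (0:ℝ)) (𝓝 (g u)) := by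
    intro u hu
    have hb1lim : Tendsto (fun ε => b1 (u * ε)) (𝓝[>] (0:ℝ)) (𝓝 a) := by
      have hcw : ContinuousWithinAt b1 (Ici 0) 0 := (hb1.continuousOn) 0 self_mem_Ici
      have h := hcw.tendsto.comp
        ((hmul u hu).mono_right (nhdsWithin_mono _ Ioi_subset_Ici_self))
      rw [ha]
      exact h
    have hb2lim : Tendsto (fun ε => b2 (u * ε) / (u * ε)) (𝓝[>] (0:ℝ)) (𝓝 b) :=
      hb2slope.comp (hmul u hu)
    have hinv : Tendsto (fun ε => ((σ (u * ε) / ε) ^ 2)⁻¹) (𝓝[>] (0:ℝ))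
        (𝓝 (((s * u) ^ 2)⁻¹)) :=
      ((hσu u hu).pow 2).inv₀ (pow_ne_zero 2 (mul_pos hspos hu).ne')
    have main := (hb1lim.mul hinv).sub ((hb2lim.mul_const u).mul hinv)
    have hval : a * ((s * u) ^ 2)⁻¹ - b * u * ((s * u) ^ 2)⁻¹ = g u := by
      rw [hgdef]
      field_simp
    rw [hval] at main
    refine main.congr' ?_
    filter_upwards [self_mem_nhdsWithin] with ε hε
    have hε0 : (0:ℝ) < ε := hε
    have hσne : σ (u * ε) ≠ 0 := (hσpos _ (mul_pos hu hε0)).ne'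
    rw [hFdef]
    field_simp
  have huIoc : ∀ u ∈ uIoc w y, 0 < u ∧ u ≤ T := by
    intro u hu
    exact ⟨lt_of_lt_of_le hm0 hu.1.le, hu.2⟩
  have hDCT : Tendsto (fun ε => ∫ u in w..y, F ε u) (𝓝[>] (0:ℝ))
      (𝓝 (∫ u in w..y, g u)) := by
    apply intervalIntegral.tendsto_integral_filter_of_dominated_convergence
      (fun _ : ℝ => (M + C * T) / (c ^ 2 * m0 ^ 2))
    · filter_upwards [self_mem_nhdsWithin] with ε hε
      have hε0 : (0:ℝ) < ε := hε
      apply ContinuousOn.aestronglyMeasurable ?_ measurableSet_uIoc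
      have hargc : ContinuousOn (fun u : ℝ => u * ε) (uIoc w y) :=
        (continuous_id.mul continuous_const).continuousOn
      have hmap : MapsTo (fun u : ℝ => u * ε) (uIoc w y) (Ici (0:ℝ)) := by
        intro u hu
        exact (mul_pos (huIoc u hu).1 hε0).le
      have hnum : ContinuousOn (fun u : ℝ => ε * b1 (u * ε) - b2 (u * ε)) (uIoc w y) :=
        ((continuousOn_const.mul ((hb1.continuousOn).comp hargc hmap)).sub
          ((hb2.continuousOn).comp hargc hmap))
      have hden : ContinuousOn (fun u : ℝ => σ (u * ε) ^ 2) (uIoc w y) :=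
        ((hσ.continuousOn).comp hargc hmap).pow 2
      exact continuousOn_const.mul (hnum.div hden (fun u hu =>
        pow_ne_zero 2 (hσpos _ (mul_pos (huIoc u hu).1 hε0)).ne'))
    · filter_upwards [Ioo_mem_nhdsGT_of_mem (by norm_num : (0:ℝ) ∈ Ico (0:ℝ) 1)]
        with ε hε
      refine ae_of_all _ fun u hu => ?_
      obtain ⟨hu0, huT⟩ := huIoc u hu
      set v := u * ε with hvdef
      have hv : 0 < v := mul_pos hu0 hε.1
      have hvT : v ≤ T := le_trans (mul_le_of_le_one_right hu0.le hε.2.le) huT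
      have hσv : c * v ≤ σ v := hclow v ⟨hv, hvT⟩
      have hb2v : b2 v ≤ C * v := hCup v ⟨hv, hvT⟩
      have hb2vnn : 0 ≤ b2 v := hb2nonneg v hv.le
      have hb1v1 : m ≤ b1 v := hmle v hv.le
      have hb1v2 : b1 v ≤ M := hM v hv.le
      have hnorm : ‖F ε u‖ = ε * (|ε * b1 v - b2 v| / σ v ^ 2) := by
        rw [hFdef, Real.norm_eq_abs, abs_mul, abs_of_pos hε.1, abs_div, abs_pow, sq_abs]
      rw [hnorm]
      have hnumle : |ε * b1 v - b2 v| ≤ ε * M + C * v := by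
        refine le_trans (abs_sub _ _) ?_
        rw [abs_of_nonneg (mul_nonneg hε.1.le (le_trans hm.le hb1v1)),
          abs_of_nonneg hb2vnn]
        exact add_le_add (mul_le_mul_of_nonneg_left hb1v2 hε.1.le) hb2v
      have hdenle : c ^ 2 * v ^ 2 ≤ σ v ^ 2 := by
        calc c ^ 2 * v ^ 2 = (c * v) ^ 2 := by ring
          _ ≤ σ v ^ 2 := pow_le_pow_left₀ (by positivity) hσv 2
      calc ε * (|ε * b1 v - b2 v| / σ v ^ 2)
          ≤ ε * ((ε * M + C * v) / (c ^ 2 * v ^ 2)) := by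
            refine mul_le_mul_of_nonneg_left ?_ hε.1.le
            exact div_le_div₀ (add_nonneg (mul_nonneg hε.1.le hMpos.le) (mul_nonneg hC hv.le)) hnumle (by positivity) hdenle
        _ = (M + C * u) / (c ^ 2 * u ^ 2) := by
            rw [hvdef]
            field_simp
            ring_nf
            exact mul_inv_cancel₀ hε.1.ne'
        _ ≤ (M + C * T) / (c ^ 2 * m0 ^ 2) := by
            refine div_le_div₀ (add_nonneg hMpos.le (mul_nonneg hC hT.le)) ?_ (by positivity) ?_
            · exact add_le_add le_rfl (mul_le_mul_of_nonneg_left huT hC)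
            · refine mul_le_mul_of_nonneg_left ?_ (by positivity)
              exact pow_le_pow_left₀ hm0.le (show m0 ≤ u from hu.1.le) 2
    · exact intervalIntegrable_const
    · exact ae_of_all _ fun u hu => hpt u (huIoc u hu).1
  -- compute the limit integral
  have hint : ∫ u in w..y, g u =
      a / s ^ 2 * (1 / w - 1 / y) - b / s ^ 2 * (Real.log y - Real.log w) := by
    have huIcc : ∀ u ∈ uIcc w y, 0 < u := fun u hu => lt_of_lt_of_le hm0 hu.1
    have hd : ∀ u ∈ uIcc w y,
        HasDerivAt (fun x => -(a / s ^ 2) * x⁻¹ - b / s ^ 2 * Real.log x) (g u) u := by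
      intro u hu
      have hu0 : 0 < u := huIcc u hu
      have h1 : HasDerivAt (fun x : ℝ => x⁻¹) (-(↑u ^ 2)⁻¹) u := hasDerivAt_inv hu0.ne'
      have h2 := Real.hasDerivAt_log hu0.ne'
      have h3 := (h1.const_mul (-(a / s ^ 2))).sub (h2.const_mul (b / s ^ 2))
      refine h3.congr_deriv ?_
      rw [hgdef]
      field_simp
      try ring
    have hgc : IntervalIntegrable g volume w y := by
      apply ContinuousOn.intervalIntegrable
      rw [hgdef]
      refine ContinuousOn.sub ?_ ?_
      · refine continuousOn_const.div (continuousOn_const.mul (continuousOn_pow 2)) ?_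
        intro u hu
        have hu0 : 0 < u := huIcc u hu
        positivity
      · refine continuousOn_const.div (continuousOn_const.mul continuousOn_id) ?_
        intro u hu
        have hu0 : 0 < u := huIcc u hu
        positivity
    rw [intervalIntegral.integral_eq_sub_of_hasDerivAt hd hgc]
    ring
  have hsne : s ≠ 0 := hspos.ne'
  have hfinal : ((s * y) ^ 2)⁻¹ *
      Real.exp (a / s ^ 2 * (1 / w - 1 / y) - b / s ^ 2 * (Real.log y - Real.log w)) =
      1 / s ^ 2 * Real.exp (a / s ^ 2 * (1 / w - 1 / y)) *
        w ^ (b / s ^ 2) / y ^ (b / s ^ 2 + 2) := by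
    rw [Real.rpow_def_of_pos hw, Real.rpow_def_of_pos hy]
    rw [show a / s ^ 2 * (1 / w - 1 / y) - b / s ^ 2 * (Real.log y - Real.log w) =
      (a / s ^ 2 * (1 / w - 1 / y) + Real.log w * (b / s ^ 2)) -
        Real.log y * (b / s ^ 2) by ring]
    rw [show Real.log y * (b / s ^ 2 + 2) =
      Real.log y * (b / s ^ 2) + (Real.log y + Real.log y) by ring]
    rw [Real.exp_sub, Real.exp_add, Real.exp_add, Real.exp_add, Real.exp_log hy]
    field_simp [Real.exp_ne_zero]
  have hmain := hpre.mul ((Real.continuous_exp.tendsto _).comp hDCT)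
  rw [hint, hfinal] at hmain
  refine hmain.congr' ?_
  filter_upwards [self_mem_nhdsWithin] with ε hε
  have hε0 : (0:ℝ) < ε := hε
  have h2 := intervalIntegral.integral_comp_mul_right
    (fun l => (ε * b1 l - b2 l) / σ l ^ 2) hε0.ne' (a := w) (b := y)
  have hI : ∫ u in w..y, F ε u = ∫ l in (w * ε)..(y * ε), (ε * b1 l - b2 l) / σ l ^ 2 := by
    simp only [hFdef]
    rw [intervalIntegral.integral_const_mul, h2, smul_eq_mul, ← mul_assoc,
      mul_inv_cancel₀ hε0.ne', one_mul]
  simp only [Function.comp_apply, hI]
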